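/- Fix integers m ≥ 2 and r ≥ 1, and real numbers t₀ ∈ (0,1), t₁ ∈ (0,1) and ε > 0. Then there exists δ > 0 such that for every C^r function ξ̄ : ℝ → ℝ with ξ̄([0,1]) ⊆ [0,1], ξ̄(t₀) = t₀, and such that for all 0 ≤ j ≤ r and all x ∈ [0,1] the j-th derivative of y ↦ ξ̄(y) − y at x has absolute value < δ, there exist η ∈ (0, t₁) and a C^r map ξ : ℝ^m → ℝ^m with ξ([0,1]^m) ⊆ [0,1]^m satisfying, for points y = (y₁,…,y_m): (a) ξ(y)ᵢ = yᵢ for every coordinate index 1 ≤ i ≤ m−1 and every y; (b) ξ(y) = y whenever y_{m−1} ≤ η; (c) the last coordinate of ξ(y) equals ξ̄(y_m) whenever y_{m−1} ≥ t₁ (in particular, on the face y_{m−1} = 1, ξ slides each height a ∈ [0,1] to the height ξ̄(a)); (d) ξ(y) = y whenever y_m = t₀; (e) for every 0 ≤ j ≤ r and every y ∈ [0,1]^m, the j-th iterated Fréchet derivative of the map z ↦ ξ(z) − z at y has operator norm < ε. -/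

import Mathlib

private lemma euclid_abs_apply_le_norm {m : ℕ} (y : EuclideanSpace ℝ (Fin m)) (i : Fin m) :
    |y i| ≤ ‖y‖ := by
  rw [EuclideanSpace.norm_eq, show |y i| = Real.sqrt (|y i|^2) by
    rw [Real.sqrt_sq_eq_abs, abs_abs]]
  apply Real.sqrt_le_sqrt
  exact Finset.single_le_sum (f := fun j => |y j|^2) (fun j _ => sq_nonneg _) (Finset.mem_univ i)

private lemma euclid_norm_proj_le {m : ℕ} (i : Fin m) :
    ‖(EuclideanSpace.proj i : EuclideanSpace ℝ (Fin m) →L[ℝ] ℝ)‖ ≤ 1 := by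
  refine ContinuousLinearMap.opNorm_le_bound _ zero_le_one fun y => ?_
  simpa using euclid_abs_apply_le_norm y i

private lemma exists_deriv_bound (φ : ℝ → ℝ) (hφ : ContDiff ℝ ((⊤:ℕ∞) : WithTop ℕ∞) φ)
    (r : ℕ) :
    ∃ C : ℝ, 1 ≤ C ∧ ∀ j ≤ r, ∀ x ∈ Set.Icc (0:ℝ) 1, ‖iteratedDeriv j φ x‖ ≤ C := by
  have hcont : ∀ j : ℕ, Continuous (iteratedDeriv j φ) := fun j =>
    hφ.continuous_iteratedDeriv j (by exact_mod_cast le_top)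
  choose c hc using fun j : ℕ =>
    (isCompact_Icc (a := (0:ℝ)) (b := 1)).exists_bound_of_continuousOn (hcont j).continuousOn
  refine ⟨1 + ∑ j ∈ Finset.range (r+1), |c j|,
    le_add_of_nonneg_right (Finset.sum_nonneg fun _ _ => abs_nonneg _), ?_⟩
  intro j hj x hx
  have h1 : ‖iteratedDeriv j φ x‖ ≤ c j := hc j x hx
  have h2 : |c j| ≤ ∑ k ∈ Finset.range (r+1), |c k| :=
    Finset.single_le_sum (fun k _ => abs_nonneg (c k)) (Finset.mem_range.mpr (by omega))
  have h3 : c j ≤ |c j| := le_abs_self _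
  linarith

set_option maxHeartbeats 2000000 in
/-- The water slide lemma: from a one-dimensional `C^r` map `ξ̄` close to the identity,
fixing `t₀` and preserving `[0,1]`, one produces an `m`-dimensional `C^r` water slide
function `ξ`, close to the identity, which fixes the first `m-1` coordinates, is the
identity for `y_{m-1} ≤ η`, slides heights by `ξ̄` for `y_{m-1} ≥ t₁`, and fixes the
hyperplane at height `t₀`. (Coordinates are `0`-indexed: `y_{m-1}` is coordinate
`m-2` and `y_m` is coordinate `m-1`.) -/
theorem water_slide_function_exists
    (m r : ℕ) (hm : 2 ≤ m) (hr : 1 ≤ r)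
    (t₀ t₁ : ℝ) (ht₀ : t₀ ∈ Set.Ioo (0 : ℝ) 1) (ht₁ : t₁ ∈ Set.Ioo (0 : ℝ) 1)
    (ε : ℝ) (hε : 0 < ε) :
    ∃ δ > (0 : ℝ),
      ∀ ξbar : ℝ → ℝ, ContDiff ℝ r ξbar →
        (Set.MapsTo ξbar (Set.Icc (0 : ℝ) 1) (Set.Icc (0 : ℝ) 1)) →
        ξbar t₀ = t₀ →
        (∀ j ≤ r, ∀ x ∈ Set.Icc (0 : ℝ) 1,
          |iteratedDeriv j (fun y => ξbar y - y) x| < δ) →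
        ∃ η : ℝ, 0 < η ∧ η < t₁ ∧
        ∃ ξ : EuclideanSpace ℝ (Fin m) → EuclideanSpace ℝ (Fin m),
          ContDiff ℝ r ξ ∧
          -- ξ maps the unit cube into the unit cube
          (∀ y : EuclideanSpace ℝ (Fin m), (∀ i, y i ∈ Set.Icc (0 : ℝ) 1) →
            ∀ i, ξ y i ∈ Set.Icc (0 : ℝ) 1) ∧
          -- (a) ξ fixes every coordinate except the last
          (∀ y : EuclideanSpace ℝ (Fin m), ∀ i : Fin m, (i : ℕ) < m - 1 →
            ξ y i = y i) ∧
          -- (b) ξ is the identity where the coordinate y_{m-1} is ≤ η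
          (∀ y : EuclideanSpace ℝ (Fin m), y ⟨m - 2, by omega⟩ ≤ η → ξ y = y) ∧
          -- (c) where y_{m-1} ≥ t₁, the last coordinate of ξ y equals ξ̄ applied to
          -- the last coordinate of y
          (∀ y : EuclideanSpace ℝ (Fin m), t₁ ≤ y ⟨m - 2, by omega⟩ →
            ξ y ⟨m - 1, by omega⟩ = ξbar (y ⟨m - 1, by omega⟩)) ∧
          -- (d) ξ fixes the hyperplane at height t₀
          (∀ y : EuclideanSpace ℝ (Fin m), y ⟨m - 1, by omega⟩ = t₀ → ξ y = y) ∧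
          -- (e) ξ is C^r-close to the identity on the unit cube
          (∀ j ≤ r, ∀ y : EuclideanSpace ℝ (Fin m),
            (∀ i, y i ∈ Set.Icc (0 : ℝ) 1) →
            ‖iteratedFDeriv ℝ j (fun z => ξ z - z) y‖ < ε) := by
  obtain ⟨ht₀0, ht₀1⟩ := ht₀
  obtain ⟨ht₁0, ht₁1⟩ := ht₁
  -- the cutoff function
  set η : ℝ := t₁ / 2 with hηdef
  have hηpos : 0 < η := by positivity
  have hηlt : η < t₁ := by rw [hηdef]; linarith
  have hden : 0 < t₁ - η := by linarith
  set φ : ℝ → ℝ := fun x => Real.smoothTransition ((x - η) / (t₁ - η)) with hφdef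
  have hφsm : ContDiff ℝ ((⊤:ℕ∞) : WithTop ℕ∞) φ :=
    Real.smoothTransition.contDiff.comp ((contDiff_id.sub contDiff_const).div_const _)
  have hφr : ContDiff ℝ r φ := hφsm.of_le (by exact_mod_cast le_top)
  have hφ0 : ∀ x : ℝ, x ≤ η → φ x = 0 := by
    intro x hx
    apply Real.smoothTransition.zero_of_nonpos
    apply div_nonpos_of_nonpos_of_nonneg <;> linarith
  have hφ1 : ∀ x : ℝ, t₁ ≤ x → φ x = 1 := by
    intro x hx
    apply Real.smoothTransition.one_of_one_le
    rw [le_div_iff₀ hden]; linarith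
  have hφmem : ∀ x : ℝ, 0 ≤ φ x ∧ φ x ≤ 1 := fun x =>
    ⟨Real.smoothTransition.nonneg _, Real.smoothTransition.le_one _⟩
  obtain ⟨C, hC1, hCb⟩ := exists_deriv_bound φ hφsm r
  have hCpos : (0:ℝ) < C := lt_of_lt_of_le one_pos hC1
  refine ⟨ε / (2 * 2 ^ r * C), by positivity, ?_⟩
  intro ξbar hξsm hξmaps hξt₀ hξclose
  set δ : ℝ := ε / (2 * 2 ^ r * C) with hδdef
  have hδpos : 0 < δ := by positivity
  refine ⟨η, hηpos, hηlt, ?_⟩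
  set i₁ : Fin m := ⟨m - 2, by omega⟩ with hi₁def
  set i₂ : Fin m := ⟨m - 1, by omega⟩ with hi₂def
  set g : ℝ → ℝ := fun y => ξbar y - y with hgdef
  have hgsm : ContDiff ℝ r g := hξsm.sub contDiff_id
  set e : EuclideanSpace ℝ (Fin m) := EuclideanSpace.single i₂ (1:ℝ) with hedef
  set F : EuclideanSpace ℝ (Fin m) → ℝ := φ ∘ (EuclideanSpace.proj i₁) with hFdef
  set G : EuclideanSpace ℝ (Fin m) → ℝ := g ∘ (EuclideanSpace.proj i₂) with hGdef
  set h : EuclideanSpace ℝ (Fin m) → ℝ := fun z => F z * G z with hhdef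
  have hF : ContDiff ℝ r F := hφr.comp (EuclideanSpace.proj (𝕜 := ℝ) i₁).contDiff
  have hG : ContDiff ℝ r G := hgsm.comp (EuclideanSpace.proj (𝕜 := ℝ) i₂).contDiff
  have hh : ContDiff ℝ r h := hF.mul hG
  refine ⟨fun z => z + h z • e, ?_, ?_, ?_, ?_, ?_, ?_, ?_⟩
  · -- smoothness
    exact contDiff_id.add (hh.smul contDiff_const)
  · -- cube into cube
    intro y hy i
    have hcoord : (y + h y • e) i = y i + h y * (if i = i₂ then 1 else 0) := by
      simp [hedef, PiLp.add_apply, PiLp.smul_apply, EuclideanSpace.single_apply,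
        smul_eq_mul]
    show (y + h y • e) i ∈ Set.Icc 0 1
    rw [hcoord]
    by_cases hii : i = i₂
    · subst hii
      rw [if_pos (rfl : i₂ = i₂), mul_one]
      have hhy : h y = φ (y i₁) * (ξbar (y i₂) - y i₂) := rfl
      obtain ⟨ha0, ha1⟩ := hy i₂
      obtain ⟨hb0, hb1⟩ := hξmaps (hy i₂)
      obtain ⟨hs0, hs1⟩ := hφmem (y i₁)
      rw [hhy]
      constructor <;> nlinarith
    · simp only [if_neg hii, mul_zero, add_zero]
      exact hy i
  · -- (a)
    intro y i hi
    have hii : i ≠ i₂ := by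
      intro hcontra
      have : (i : ℕ) = m - 1 := by rw [hcontra]
      omega
    show (y + h y • e) i = y i
    simp [hedef, PiLp.add_apply, PiLp.smul_apply, EuclideanSpace.single_apply, hii]
  · -- (b)
    intro y hy
    have hFy : F y = 0 := hφ0 _ hy
    have h0 : h y = 0 := by rw [hhdef]; simp [hFy]
    show y + h y • e = y
    rw [h0]; simp
  · -- (c)
    intro y hy
    have hFy : F y = 1 := hφ1 _ hy
    have hcoord : (y + h y • e) i₂ = y i₂ + h y := by
      simp [hedef, PiLp.add_apply, PiLp.smul_apply, EuclideanSpace.single_apply,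
        smul_eq_mul]
    show (y + h y • e) i₂ = ξbar (y i₂)
    rw [hcoord, hhdef]
    simp only [hFy, one_mul]
    show y i₂ + (ξbar (y i₂) - y i₂) = ξbar (y i₂)
    ring
  · -- (d)
    intro y hy
    have hGy : G y = 0 := by
      show g (y i₂) = 0
      show ξbar (y i₂) - (y i₂) = 0
      rw [show y i₂ = t₀ from hy, hξt₀, sub_self]
    have h0 : h y = 0 := by rw [hhdef]; simp [hGy]
    show y + h y • e = y
    rw [h0]; simp
  · -- (e)
    intro j hj y hy
    have hjr : (j : WithTop ℕ∞) ≤ (r : WithTop ℕ∞) := by exact_mod_cast hj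
    set T : ℝ →L[ℝ] EuclideanSpace ℝ (Fin m) := ContinuousLinearMap.toSpanSingleton ℝ e
      with hTdef
    show ‖iteratedFDeriv ℝ j (fun z => (z + h z • e) - z) y‖ < ε
    have hsub : (fun z : EuclideanSpace ℝ (Fin m) => (z + h z • e) - z) = ⇑T ∘ h := by
      funext z
      simp [hTdef, Function.comp, ContinuousLinearMap.toSpanSingleton_apply,
        add_sub_cancel_left]
    rw [hsub, T.iteratedFDeriv_comp_left (x := y) hh.contDiffAt hjr]
    have hTnorm : ‖T‖ = 1 := by
      rw [hTdef, ContinuousLinearMap.norm_toSpanSingleton, hedef,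
        EuclideanSpace.norm_single, norm_one]
    have step1 : ‖T.compContinuousMultilinearMap (iteratedFDeriv ℝ j h y)‖ ≤
        ‖iteratedFDeriv ℝ j h y‖ := by
      calc ‖T.compContinuousMultilinearMap (iteratedFDeriv ℝ j h y)‖
          ≤ ‖T‖ * ‖iteratedFDeriv ℝ j h y‖ :=
            T.norm_compContinuousMultilinearMap_le _
        _ = ‖iteratedFDeriv ℝ j h y‖ := by rw [hTnorm, one_mul]
    -- bounds for factors
    have hFb : ∀ i, i ≤ r → ‖iteratedFDeriv ℝ i F y‖ ≤ C := by
      intro i hi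
      have hir : (i : WithTop ℕ∞) ≤ (r : WithTop ℕ∞) := by exact_mod_cast hi
      rw [hFdef, (EuclideanSpace.proj i₁).iteratedFDeriv_comp_right hφr y hir]
      calc ‖(iteratedFDeriv ℝ i φ (EuclideanSpace.proj i₁ y)).compContinuousLinearMap
              fun _ => EuclideanSpace.proj i₁‖
          ≤ ‖iteratedFDeriv ℝ i φ (EuclideanSpace.proj i₁ y)‖ *
              ∏ _k : Fin i, ‖(EuclideanSpace.proj i₁ :
                EuclideanSpace ℝ (Fin m) →L[ℝ] ℝ)‖ :=
            ContinuousMultilinearMap.norm_compContinuousLinearMap_le _ _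
        _ ≤ C * 1 := by
            apply mul_le_mul _ _ (Finset.prod_nonneg fun _ _ => norm_nonneg _) hCpos.le
            · rw [norm_iteratedFDeriv_eq_norm_iteratedDeriv]
              exact hCb i hi _ (hy i₁)
            · exact Finset.prod_le_one (fun _ _ => norm_nonneg _)
                (fun _ _ => euclid_norm_proj_le _)
        _ = C := mul_one C
    have hGb : ∀ i, i ≤ r → ‖iteratedFDeriv ℝ i G y‖ ≤ δ := by
      intro i hi
      have hir : (i : WithTop ℕ∞) ≤ (r : WithTop ℕ∞) := by exact_mod_cast hi
      rw [hGdef, (EuclideanSpace.proj i₂).iteratedFDeriv_comp_right hgsm y hir]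
      calc ‖(iteratedFDeriv ℝ i g (EuclideanSpace.proj i₂ y)).compContinuousLinearMap
              fun _ => EuclideanSpace.proj i₂‖
          ≤ ‖iteratedFDeriv ℝ i g (EuclideanSpace.proj i₂ y)‖ *
              ∏ _k : Fin i, ‖(EuclideanSpace.proj i₂ :
                EuclideanSpace ℝ (Fin m) →L[ℝ] ℝ)‖ :=
            ContinuousMultilinearMap.norm_compContinuousLinearMap_le _ _
        _ ≤ δ * 1 := by
            apply mul_le_mul _ _ (Finset.prod_nonneg fun _ _ => norm_nonneg _) hδpos.le
            · rw [norm_iteratedFDeriv_eq_norm_iteratedDeriv]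
              exact le_of_lt (hξclose i hi _ (hy i₂))
            · exact Finset.prod_le_one (fun _ _ => norm_nonneg _)
                (fun _ _ => euclid_norm_proj_le _)
        _ = δ := mul_one δ
    have step2 : ‖iteratedFDeriv ℝ j h y‖ ≤ 2 ^ j * C * δ := by
      calc ‖iteratedFDeriv ℝ j h y‖
          ≤ ∑ i ∈ Finset.range (j + 1), (j.choose i : ℝ) *
              ‖iteratedFDeriv ℝ i F y‖ * ‖iteratedFDeriv ℝ (j - i) G y‖ :=
            norm_iteratedFDeriv_mul_le hF hG y hjr
        _ ≤ ∑ i ∈ Finset.range (j + 1), (j.choose i : ℝ) * C * δ := by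
            apply Finset.sum_le_sum
            intro i hi
            have hi' : i ≤ r := by
              have := Finset.mem_range.mp hi; omega
            have hji' : j - i ≤ r := by omega
            have h1 := hFb i hi'
            have h2 := hGb (j - i) hji'
            have hn1 : (0:ℝ) ≤ (j.choose i : ℝ) := Nat.cast_nonneg _
            calc (j.choose i : ℝ) * ‖iteratedFDeriv ℝ i F y‖ *
                  ‖iteratedFDeriv ℝ (j - i) G y‖
                ≤ (j.choose i : ℝ) * C * ‖iteratedFDeriv ℝ (j - i) G y‖ := by
                  apply mul_le_mul_of_nonneg_right _ (norm_nonneg _)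
                  exact mul_le_mul_of_nonneg_left h1 hn1
              _ ≤ (j.choose i : ℝ) * C * δ := by
                  apply mul_le_mul_of_nonneg_left h2 (by positivity)
        _ = 2 ^ j * C * δ := by
            rw [← Finset.sum_mul, ← Finset.sum_mul, ← Nat.cast_sum,
              Nat.sum_range_choose]
            push_cast
            ring
    have hpow : (2:ℝ) ^ j ≤ 2 ^ r := by
      apply pow_le_pow_right₀ one_le_two hj
    have step3 : (2:ℝ) ^ j * C * δ ≤ ε / 2 := by
      have : (2:ℝ) ^ r * C * δ = ε / 2 := by
        rw [hδdef]
        field_simp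
      calc (2:ℝ) ^ j * C * δ ≤ 2 ^ r * C * δ := by
            apply mul_le_mul_of_nonneg_right _ hδpos.le
            exact mul_le_mul_of_nonneg_right hpow hCpos.le
        _ = ε / 2 := this
    calc ‖T.compContinuousMultilinearMap (iteratedFDeriv ℝ j h y)‖
        ≤ ‖iteratedFDeriv ℝ j h y‖ := step1
      _ ≤ 2 ^ j * C * δ := step2
      _ ≤ ε / 2 := step3
      _ < ε := by linarith
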